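/- For any tree T on n ≥ 3 vertices, the distance between the center C(T) and the centroid CT(T) satisfies d(C(T), CT(T)) ≤ ⌊(n-3)/4⌋. -/

import Mathlib

open SimpleGraph Finset

/-- Eccentricity of a vertex: max distance to any vertex. -/
noncomputable def ecc {V : Type*} [Fintype V] (G : SimpleGraph V) (v : V) : ℕ :=
  Finset.univ.sup (fun u => G.dist v u)

/-- The center: vertices of minimum eccentricity. -/
noncomputable def center {V : Type*} [Fintype V] (G : SimpleGraph V) : Set V :=
  {v | ∀ u, ecc G v ≤ ecc G u}

/-- Total distance of a vertex. -/
noncomputable def totalDist {V : Type*} [Fintype V] (G : SimpleGraph V) (v : V) : ℕ :=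
  ∑ u, G.dist v u

/-- The centroid: vertices of minimum total distance. -/
noncomputable def centroid {V : Type*} [Fintype V] (G : SimpleGraph V) : Set V :=
  {v | ∀ u, totalDist G v ≤ totalDist G u}

/-- Number of subtrees (connected induced subgraphs on nonempty vertex sets) containing `v`. -/
noncomputable def subtreeCount {V : Type*} [Fintype V] (G : SimpleGraph V) (v : V) : ℕ :=
  Nat.card {A : Finset V // v ∈ A ∧ (G.induce (A : Set V)).Connected}

/-- The subtree core: vertices maximizing the number of containing subtrees. -/
noncomputable def core {V : Type*} [Fintype V] (G : SimpleGraph V) : Set V :=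
  {v | ∀ u, subtreeCount G u ≤ subtreeCount G v}

/-- Distance between two sets of vertices. -/
noncomputable def setDist {V : Type*} (G : SimpleGraph V) (S S' : Set V) : ℕ :=
  sInf {n | ∃ u ∈ S, ∃ v ∈ S', G.dist u v = n}


set_option linter.unusedSectionVars false


namespace CCD

variable {V : Type*} [DecidableEq V] {G : SimpleGraph V}

lemma walk_mem_edge (hT : G.IsTree) {c w : V} (h : G.Adj c w) (p : G.Walk c w) :
    s(c, w) ∈ p.edges := by
  have hb : G.IsBridge s(c, w) :=
    (isAcyclic_iff_forall_edge_isBridge.mp hT.IsAcyclic) (by simpa using h)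
  exact (isBridge_iff_adj_and_forall_walk_mem_edges.mp hb) p

lemma dist_split (hc : G.Connected) {a b x : V} (p : G.Walk a b)
    (hp : p.length = G.dist a b) (hx : x ∈ p.support) :
    G.dist a x + G.dist x b = G.dist a b := by
  have h1 : G.dist a x ≤ (p.takeUntil x hx).length := dist_le _
  have h2 : G.dist x b ≤ (p.dropUntil x hx).length := dist_le _
  have h3 : (p.takeUntil x hx).length + (p.dropUntil x hx).length = p.length := by
    have := congrArg Walk.length (p.take_spec hx)
    rwa [Walk.length_append] at this
  have h4 := hc.dist_triangle (u := a) (v := x) (w := b)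
  omega

lemma dichotomy (hT : G.IsTree) {c w : V} (h : G.Adj c w) (x : V) :
    G.dist w x = G.dist c x + 1 ∨ G.dist c x = G.dist w x + 1 := by
  have hc := hT.isConnected
  have hcw : G.dist c w = 1 := dist_eq_one_iff_adj.mpr h
  have hwc : G.dist w c = 1 := by rwa [dist_comm] at hcw
  have t1 : G.dist c x ≤ G.dist c w + G.dist w x := hc.dist_triangle
  have t2 : G.dist w x ≤ G.dist w c + G.dist c x := hc.dist_triangle
  rcases Nat.lt_trichotomy (G.dist c x) (G.dist w x) with hlt | heq | hgt
  · left; omega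
  · exfalso
    obtain ⟨α, hα⟩ := hc.exists_walk_length_eq_dist c x
    obtain ⟨β, hβ⟩ := hc.exists_walk_length_eq_dist x w
    have hmem := walk_mem_edge hT h (α.append β)
    rw [Walk.edges_append, List.mem_append] at hmem
    have e1 : G.dist x c = G.dist c x := dist_comm ..
    have e2 : G.dist x w = G.dist w x := dist_comm ..
    rcases hmem with hm | hm
    · have hws : w ∈ α.support := α.snd_mem_support_of_mem_edges hm
      have := dist_split hc α hα hws
      omega
    · have hcs : c ∈ β.support := β.fst_mem_support_of_mem_edges hm
      have := dist_split hc β hβ hcs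
      omega
  · right; omega

lemma cross (hT : G.IsTree) {c w : V} (h : G.Adj c w) {x y : V}
    (hx : G.dist w x = G.dist c x + 1) (hy : G.dist c y = G.dist w y + 1) :
    G.dist x y = G.dist c x + 1 + G.dist w y := by
  have hc := hT.isConnected
  have hcw : G.dist c w = 1 := dist_eq_one_iff_adj.mpr h
  obtain ⟨α, hα⟩ := hc.exists_walk_length_eq_dist c x
  obtain ⟨p, hp⟩ := hc.exists_walk_length_eq_dist x y
  obtain ⟨β, hβ⟩ := hc.exists_walk_length_eq_dist y w
  have hmem := walk_mem_edge hT h (α.append (p.append β))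
  rw [Walk.edges_append, Walk.edges_append, List.mem_append, List.mem_append] at hmem
  have e1 : G.dist x c = G.dist c x := dist_comm ..
  have e2 : G.dist y c = G.dist c y := dist_comm ..
  have e3 : G.dist y w = G.dist w y := dist_comm ..
  rcases hmem with hm | hm | hm
  · exfalso
    have hws : w ∈ α.support := α.snd_mem_support_of_mem_edges hm
    have := dist_split hc α hα hws
    omega
  · have hcs : c ∈ p.support := p.fst_mem_support_of_mem_edges hm
    have := dist_split hc p hp hcs
    omega
  · exfalso
    have hcs : c ∈ β.support := β.fst_mem_support_of_mem_edges hm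
    have := dist_split hc β hβ hcs
    omega

lemma exists_dist_split (hc : G.Connected) (a b : V) (j : ℕ) (hj : j ≤ G.dist a b) :
    ∃ x, G.dist a x = j ∧ G.dist x b + j = G.dist a b := by
  induction j with
  | zero => exact ⟨a, by simp, by simp⟩
  | succ j ih =>
    obtain ⟨x, hax, hxb⟩ := ih (by omega)
    obtain ⟨q, hq⟩ := hc.exists_walk_length_eq_dist x b
    cases q with
    | nil => simp only [Walk.length_nil] at hq; omega
    | @cons _ x' _ h' q' =>
      have h1 : G.dist x' b ≤ q'.length := dist_le _
      have hq' : q'.length + 1 = G.dist x b := by simpa using hq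
      have t1 : G.dist x b ≤ G.dist x x' + G.dist x' b := hc.dist_triangle
      have hxx' : G.dist x x' = 1 := dist_eq_one_iff_adj.mpr h'
      have t2 : G.dist a x' ≤ G.dist a x + G.dist x x' := hc.dist_triangle
      have t3 : G.dist a b ≤ G.dist a x' + G.dist x' b := hc.dist_triangle
      exact ⟨x', by omega, by omega⟩

end CCD

/-- For any tree `T` on `n ≥ 3` vertices,
`d(C(T), CT(T)) ≤ ⌊(n-3)/4⌋`. -/
theorem center_centroid_dist_le {V : Type*} [Fintype V] (G : SimpleGraph V)
    (hT : G.IsTree) (n : ℕ) (hn : n = Fintype.card V) (h3 : 3 ≤ n) :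
    setDist G (_root_.center G) (centroid G) ≤ (n - 3) / 4 := by
  classical
  have hc := hT.isConnected
  haveI hne : Nonempty V := Fintype.card_pos_iff.mp (by omega)
  set S : Set ℕ := {d | ∃ u ∈ _root_.center G, ∃ v ∈ centroid G, G.dist u v = d} with hS
  have hrfl : setDist G (_root_.center G) (centroid G) = sInf S := rfl
  obtain ⟨c₀, -, hc₀⟩ := Finset.exists_min_image univ (ecc G) Finset.univ_nonempty
  obtain ⟨m₀, -, hm₀⟩ := Finset.exists_min_image univ (totalDist G) Finset.univ_nonempty
  have hc₀C : c₀ ∈ _root_.center G := fun u => hc₀ u (Finset.mem_univ u)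
  have hm₀C : m₀ ∈ centroid G := fun u => hm₀ u (Finset.mem_univ u)
  have hSne : S.Nonempty := ⟨G.dist c₀ m₀, c₀, hc₀C, m₀, hm₀C, rfl⟩
  have hmem0 := Nat.sInf_mem hSne
  rw [hS] at hmem0
  simp only [Set.mem_setOf_eq] at hmem0
  obtain ⟨c, hcC, m, hmC, hk⟩ := hmem0
  rw [hrfl]
  set k := sInf S with hkdef
  suffices h4 : 4 * k ≤ n - 3 by
    rw [Nat.le_div_iff_mul_le (by norm_num)]; omega
  by_cases hk0 : k = 0
  · omega
  have hk1 : 1 ≤ k := by omega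
  have hrle : ∀ x, G.dist c x ≤ ecc G c := fun x => Finset.le_sup (Finset.mem_univ x)
  set r := ecc G c with hrdef
  -- the neighbor w of c towards m
  obtain ⟨w, hw1, hw2⟩ := CCD.exists_dist_split hc c m 1 (by omega)
  have hcw : G.Adj c w := dist_eq_one_iff_adj.mp hw1
  -- Step 1 : an eccentric vertex of c on the c-side of edge (c,w)
  have hstep1 : ∃ u, G.dist w u = G.dist c u + 1 ∧ G.dist c u = r := by
    by_contra hno
    push_neg at hno
    have hww : ∀ x, G.dist w x ≤ r := by
      intro x
      rcases CCD.dichotomy hT hcw x with hA | hB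
      · have h1 := hrle x; have h2 := hno x hA; omega
      · have h1 := hrle x; omega
    have heccw : ecc G w ≤ r := Finset.sup_le fun x _ => hww x
    have hwC : w ∈ _root_.center G := fun u => le_trans heccw (hcC u)
    have hmem : G.dist w m ∈ S := ⟨w, hwC, m, hmC, rfl⟩
    have hle := Nat.sInf_le hmem
    omega
  obtain ⟨u, huA, hur⟩ := hstep1
  -- the neighbor q of m towards c
  obtain ⟨q, hq1, hq2⟩ := CCD.exists_dist_split hc c m (k - 1) (by omega)
  have hqm1 : G.dist q m = 1 := by omega
  have hqm : G.Adj q m := dist_eq_one_iff_adj.mp hqm1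
  have hqc : G.dist q c = k - 1 := by rw [SimpleGraph.dist_comm]; exact hq1
  -- q is not a centroid vertex, so totalDist m < totalDist q
  have hqnot : q ∉ centroid G := by
    intro hqC
    have hmem : G.dist c q ∈ S := ⟨c, hcC, q, hqC, rfl⟩
    have hle := Nat.sInf_le hmem
    omega
  have htd : totalDist G m < totalDist G q := by
    by_contra hle
    push_neg at hle
    exact hqnot fun u => le_trans hle (hmC u)
  -- the c-side of the edge (q,m)
  set A : Finset V := univ.filter (fun x => G.dist m x = G.dist q x + 1) with hAdef
  have hptwise : ∀ x : V, G.dist q x + (if G.dist m x = G.dist q x + 1 then 1 else 0)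
      = G.dist m x + (if G.dist m x = G.dist q x + 1 then 0 else 1) := by
    intro x
    rcases CCD.dichotomy hT hqm x with h | h
    · simp [h]
    · have hne' : ¬ (G.dist m x = G.dist q x + 1) := by omega
      simp only [hne', if_false]; omega
  have hsum : totalDist G q + A.card
      = totalDist G m + (univ.filter (fun x => ¬ (G.dist m x = G.dist q x + 1))).card := by
    have h1 := Finset.sum_congr rfl (fun x (_ : x ∈ (univ : Finset V)) => hptwise x)
    rw [Finset.sum_add_distrib, Finset.sum_add_distrib] at h1
    have h2 : ∑ x : V, (if G.dist m x = G.dist q x + 1 then 1 else 0) = A.card := by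
      rw [hAdef, Finset.card_filter]
    have h3 : ∑ x : V, (if G.dist m x = G.dist q x + 1 then 0 else 1)
        = (univ.filter (fun x => ¬ (G.dist m x = G.dist q x + 1))).card := by
      rw [Finset.card_filter]
      exact Finset.sum_congr rfl fun x _ => by by_cases h : G.dist m x = G.dist q x + 1 <;> simp [h]
    rw [h2, h3] at h1
    exact h1
  have hfc : A.card + (univ.filter (fun x => ¬ (G.dist m x = G.dist q x + 1))).card
      = Fintype.card V := by
    rw [hAdef]
    rw [Finset.card_filter_add_card_filter_not]
    exact Finset.card_univ
  have h2A : 2 * A.card + 1 ≤ n := by omega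
  -- c is on the c-side of (q,m)
  have hcA : G.dist m c = G.dist q c + 1 := by
    rw [SimpleGraph.dist_comm (u := m) (v := c)]; omega
  have hyc : G.dist c m = G.dist w m + 1 := by omega
  -- surjectivity onto [1, k+r]
  have hsurj : ∀ j, 1 ≤ j → j ≤ k + r → ∃ x ∈ A, G.dist m x = j := by
    intro j hj1 hj2
    by_cases hcase : j ≤ k - 1
    · obtain ⟨x, hx1, hx2⟩ := CCD.exists_dist_split hc c m (k - j) (by omega)
      have hmx : G.dist m x = j := by rw [SimpleGraph.dist_comm]; omega
      rcases CCD.dichotomy hT hqm x with hA' | hB'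
      · exact ⟨x, by rw [hAdef]; exact Finset.mem_filter.mpr ⟨Finset.mem_univ x, hA'⟩, hmx⟩
      · exfalso
        have hcr := CCD.cross hT hqm hcA hB'
        omega
    · obtain ⟨x, hx1, hx2⟩ := CCD.exists_dist_split hc c u (j - k) (by omega)
      have hxA : G.dist w x = G.dist c x + 1 := by
        rcases CCD.dichotomy hT hcw x with h | h
        · exact h
        · exfalso
          have hcr := CCD.cross hT hcw huA h
          have e : G.dist x u = G.dist u x := dist_comm ..
          omega
      have hxm := CCD.cross hT hcw hxA hyc
      have hmx : G.dist m x = j := by rw [SimpleGraph.dist_comm]; omega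
      have htri : G.dist q x ≤ G.dist q c + G.dist c x := hc.dist_triangle
      rcases CCD.dichotomy hT hqm x with hA' | hB'
      · exact ⟨x, by rw [hAdef]; exact Finset.mem_filter.mpr ⟨Finset.mem_univ x, hA'⟩, hmx⟩
      · exfalso; omega
  have hsurjOn : Set.SurjOn (fun x => G.dist m x) (A : Set V)
      ((Finset.Icc 1 (k + r)) : Set ℕ) := by
    intro j hj
    simp only [Finset.coe_Icc, Set.mem_Icc] at hj
    obtain ⟨x, hxA, hxd⟩ := hsurj j hj.1 hj.2
    exact ⟨x, hxA, hxd⟩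
  have hcard : k + r ≤ A.card := by
    have h := Finset.card_le_card_of_surjOn (fun x => G.dist m x) hsurjOn
    simpa using h
  -- Step 4 : k + 1 ≤ r
  have hyex : ∃ y, y ∉ A ∧ y ≠ m := by
    by_contra hno
    push_neg at hno
    have hsub : (univ : Finset V) ⊆ insert m A := by
      intro y _
      by_cases hy : y ∈ A
      · exact Finset.mem_insert_of_mem hy
      · rw [hno y hy]; exact Finset.mem_insert_self ..
    have h1 := Finset.card_le_card hsub
    have h2 := Finset.card_insert_le m A
    rw [Finset.card_univ] at h1
    omega
  obtain ⟨y, hyA, hym⟩ := hyex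
  have hyB : G.dist q y = G.dist m y + 1 := by
    rcases CCD.dichotomy hT hqm y with h | h
    · exact absurd (by rw [hAdef]; exact Finset.mem_filter.mpr ⟨Finset.mem_univ y, h⟩) hyA
    · exact h
  have hy1 : 0 < G.dist m y := hc.pos_dist_of_ne (Ne.symm hym)
  have hcy := CCD.cross hT hqm hcA hyB
  have hcyr := hrle y
  omega
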